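/- Let X, Y_1, …, Y_D be finite random variables such that for every i < j there exists a channel (stochastic kernel) W_{i,j} with P_{Y_j|X} = W_{i,j} ∘ P_{Y_i|X} (each Y_j is a degraded version of Y_i). Then there exist random variables X', Y'_1, …, Y'_D on the same respective alphabets such that (X', Y'_ℓ) has the same joint distribution as (X, Y_ℓ) for every ℓ ∈ [D], and X' → Y'_1 → Y'_2 → ⋯ → Y'_D forms a Markov chain. -/

import Mathlib

attribute [-instance] instDecidableAnd


open scoped Classical

/-- Probability `P[X = x]`, with the `Fintype` instance on the sample space explicit. -/
noncomputable def prE {Ω α : Type} (F : Fintype Ω) (p : Ω → ℝ) (X : Ω → α) (x : α) : ℝ :=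
  F.elems.sum fun ω => if X ω = x then p ω else 0

/-- Shannon conditional entropy `H(X | Y)`, with the sample-space `Fintype` explicit. -/
noncomputable def condEntE {Ω α β : Type} (F : Fintype Ω) [Fintype α] [Fintype β]
    (p : Ω → ℝ) (X : Ω → α) (Y : Ω → β) : ℝ :=
  -∑ x : α, ∑ y : β, prE F p (fun ω => (X ω, Y ω)) (x, y) *
      Real.log (prE F p (fun ω => (X ω, Y ω)) (x, y) / prE F p Y y)

/-- Conditional mutual information `I(X ; Y | Z)`, with the sample-space `Fintype` explicit. -/
noncomputable def mutInfoE {Ω α β γ : Type} (F : Fintype Ω)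
    [Fintype α] [Fintype β] [Fintype γ]
    (p : Ω → ℝ) (X : Ω → α) (Y : Ω → β) (Z : Ω → γ) : ℝ :=
  condEntE F p X Z - condEntE F p X (fun ω => (Y ω, Z ω))

set_option linter.unusedSectionVars false

section Aux
variable {D : ℕ} {β : Fin D → Type} [∀ j, Fintype (β j)]

/-- product of chain kernels along coordinates `0..t` of `g`. -/
noncomputable def cPref (V : (k : ℕ) → (h : k + 1 < D) → β ⟨k, Nat.lt_of_succ_lt h⟩ → β ⟨k + 1, h⟩ → ℝ)
    (t : ℕ) (g : ∀ j, β j) : ℝ :=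
  ∏ k ∈ Finset.range t, if h : k + 1 < D then V k h (g ⟨k, Nat.lt_of_succ_lt h⟩) (g ⟨k + 1, h⟩) else 1

variable (V : (k : ℕ) → (h : k + 1 < D) → β ⟨k, Nat.lt_of_succ_lt h⟩ → β ⟨k + 1, h⟩ → ℝ)

lemma cPref_succ (t : ℕ) (g : ∀ j, β j) :
    cPref V (t + 1) g = cPref V t g *
      (if h : t + 1 < D then V t h (g ⟨t, Nat.lt_of_succ_lt h⟩) (g ⟨t + 1, h⟩) else 1) :=
  Finset.prod_range_succ _ _

lemma cPref_congr {t : ℕ} {g g' : ∀ j, β j} (h : ∀ j : Fin D, j.val ≤ t → g j = g' j) :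
    cPref V t g = cPref V t g' := by
  unfold cPref
  refine Finset.prod_congr rfl fun k hk => ?_
  rw [Finset.mem_range] at hk
  split_ifs with h1
  · rw [h ⟨k, Nat.lt_of_succ_lt h1⟩ ((by omega : k ≤ t)), h ⟨k + 1, h1⟩ ((by omega : k + 1 ≤ t))]
  · rfl

lemma cPref_nonneg (hV : ∀ k h a b, 0 ≤ V k h a b) (t : ℕ) (g : ∀ j, β j) :
    0 ≤ cPref V t g := by
  refine Finset.prod_nonneg fun k _ => ?_
  split_ifs with h1
  · exact hV _ _ _ _
  · exact zero_le_one

lemma sum_partition (H : (∀ j, β j) → ℝ) (i : Fin D) :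
    ∑ g : ∀ j, β j, H g = ∑ b : β i, ∑ g : ∀ j, β j, (if g i = b then H g else 0) := by
  rw [Finset.sum_comm]
  refine Finset.sum_congr rfl fun g _ => ?_
  rw [Finset.sum_ite_eq Finset.univ (g i) (fun _ => H g), if_pos (Finset.mem_univ _)]

lemma sum_reloc (i : Fin D) (H : (∀ j, β j) → ℝ)
    (hH : ∀ g y, H (Function.update g i y) = H g) (y b : β i) :
    ∑ g : ∀ j, β j, (if g i = y then H g else 0)
      = ∑ g : ∀ j, β j, (if g i = b then H g else 0) := by
  rw [← Finset.sum_filter, ← Finset.sum_filter]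
  refine Finset.sum_nbij' (fun g => Function.update g i b) (fun g => Function.update g i y)
    ?_ ?_ ?_ ?_ ?_
  · intro g hg; simp [Finset.mem_filter]
  · intro g hg; simp [Finset.mem_filter]
  · intro g hg
    rw [Finset.mem_filter] at hg
    show Function.update (Function.update g i b) i y = g
    rw [Function.update_idem, ← hg.2, Function.update_eq_self]
  · intro g hg
    rw [Finset.mem_filter] at hg
    show Function.update (Function.update g i y) i b = g
    rw [Function.update_idem, ← hg.2, Function.update_eq_self]
  · intro g hg; exact (hH g b).symm

lemma sum_drop (i : Fin D) (H : (∀ j, β j) → ℝ)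
    (hH : ∀ g y, H (Function.update g i y) = H g) (b : β i) :
    ∑ g : ∀ j, β j, H g
      = (Fintype.card (β i) : ℝ) * ∑ g : ∀ j, β j, (if g i = b then H g else 0) := by
  rw [sum_partition H i]
  rw [Finset.sum_congr rfl fun y _ => sum_reloc i H hH y b]
  rw [Finset.sum_const, Finset.card_univ, nsmul_eq_mul]

lemma sum_countf (hne : ∀ j, Nonempty (β j)) (i : Fin D) (b : β i) :
    ∑ g : ∀ j, β j, (if g i = b then (1 : ℝ) else 0)
      = ∏ j ∈ Finset.univ.filter (fun j : Fin D => j ≠ i), (Fintype.card (β j) : ℝ) := by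
  have h := sum_drop i (fun _ => (1 : ℝ)) (fun _ _ => rfl) b
  rw [Finset.sum_const, Finset.card_univ, nsmul_eq_mul, mul_one] at h
  have hcard : (Fintype.card (∀ j, β j) : ℝ) = ∏ j : Fin D, (Fintype.card (β j) : ℝ) := by
    rw [Fintype.card_pi]; push_cast; ring
  have hsplit : (∏ j : Fin D, (Fintype.card (β j) : ℝ))
      = (Fintype.card (β i) : ℝ) * ∏ j ∈ Finset.univ.filter (fun j : Fin D => j ≠ i),
          (Fintype.card (β j) : ℝ) := by
    rw [Finset.filter_ne']
    exact (Finset.mul_prod_erase Finset.univ _ (Finset.mem_univ i)).symm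
  have hcne : (Fintype.card (β i) : ℝ) ≠ 0 := by
    have := Fintype.card_pos (α := β i)
    positivity
  apply mul_left_cancel₀ hcne
  rw [← h, hcard, hsplit]
lemma tailstep (hne : ∀ j, Nonempty (β j))
    (hrow : ∀ k (h : k + 1 < D) a, ∑ b, V k h a b = 1)
    (t : ℕ) (ht1 : t + 1 < D) (F : (∀ j, β j) → ℝ)
    (hF : ∀ g g', (∀ j : Fin D, j.val ≤ t → g j = g' j) → F g = F g') :
    ∑ g : ∀ j, β j, F g * cPref V t g
      = (Fintype.card (β ⟨t + 1, ht1⟩) : ℝ) * ∑ g : ∀ j, β j, F g * cPref V (t + 1) g := by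
  set i : Fin D := ⟨t + 1, ht1⟩ with hi
  set tidx : Fin D := ⟨t, Nat.lt_of_succ_lt ht1⟩ with htidx
  have htne : tidx ≠ i := by rw [hi, htidx, Fin.ne_iff_vne]; simp
  haveI := hne i
  set b0 : β i := Classical.arbitrary (β i) with hb0
  set H : (∀ j, β j) → ℝ := fun g => F g * cPref V t g with hH
  have hupd : ∀ (g : ∀ j, β j) (y : β i) (j : Fin D), j.val ≤ t → Function.update g i y j = g j := by
    intro g y j hj
    apply Function.update_of_ne
    rw [Fin.ne_iff_vne]; simp only [hi]; omega
  have hHupd : ∀ g y, H (Function.update g i y) = H g := by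
    intro g y
    rw [hH]
    simp only
    rw [hF _ _ (hupd g y), cPref_congr V (g := Function.update g i y) (g' := g) (hupd g y)]
  have step1 : ∑ g : ∀ j, β j, F g * cPref V (t + 1) g
      = ∑ g : ∀ j, β j, H g * V t ht1 (g tidx) (g i) := by
    refine Finset.sum_congr rfl fun g _ => ?_
    rw [cPref_succ, dif_pos ht1, hH]; ring
  have step2 : ∑ g : ∀ j, β j, H g * V t ht1 (g tidx) (g i)
      = ∑ g : ∀ j, β j, (if g i = b0 then H g else 0) := by
    rw [sum_partition (fun g => H g * V t ht1 (g tidx) (g i)) i]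
    have e1 : ∀ b : β i, ∑ g : ∀ j, β j, (if g i = b then H g * V t ht1 (g tidx) (g i) else 0)
        = ∑ g : ∀ j, β j, (if g i = b0 then H g * V t ht1 (g tidx) b else 0) := by
      intro b
      have : ∀ g : ∀ j, β j, (if g i = b then H g * V t ht1 (g tidx) (g i) else 0)
          = (if g i = b then H g * V t ht1 (g tidx) b else 0) := by
        intro g; split_ifs with hgi
        · rw [hgi]
        · rfl
      rw [Finset.sum_congr rfl fun g _ => this g]
      exact sum_reloc i (fun g => H g * V t ht1 (g tidx) b)
        (fun g y => by
          show H (Function.update g i y) * V t ht1 (Function.update g i y tidx) b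
            = H g * V t ht1 (g tidx) b
          rw [hHupd g y, Function.update_of_ne htne]) b b0
    rw [Finset.sum_congr rfl fun b _ => e1 b, Finset.sum_comm]
    refine Finset.sum_congr rfl fun g _ => ?_
    by_cases hgi : g i = b0
    · simp only [hgi, if_true, ← Finset.mul_sum, hrow t ht1 (g tidx), mul_one]
      exact (congrArg (H g * ·) (hrow t ht1 (g tidx))).trans (mul_one _)
    · simp [hgi]
  have step3 := sum_drop i H hHupd b0
  rw [step1, step2, ← step3]

lemma tail (hne : ∀ j, Nonempty (β j))
    (hrow : ∀ k (h : k + 1 < D) a, ∑ b, V k h a b = 1)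
    (t : ℕ) (ht : t < D) (F : (∀ j, β j) → ℝ)
    (hF : ∀ g g', (∀ j : Fin D, j.val ≤ t → g j = g' j) → F g = F g') :
    ∑ g : ∀ j, β j, F g * cPref V t g
      = (∏ j ∈ Finset.univ.filter (fun j : Fin D => t < j.val), (Fintype.card (β j) : ℝ))
          * ∑ g : ∀ j, β j, F g * cPref V (D - 1) g := by
  have main : ∀ s : ℕ, t ≤ s → s < D →
      ∑ g : ∀ j, β j, F g * cPref V t g
        = (∏ j ∈ Finset.univ.filter (fun j : Fin D => t < j.val ∧ j.val ≤ s),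
            (Fintype.card (β j) : ℝ)) * ∑ g : ∀ j, β j, F g * cPref V s g := by
    intro s
    induction s with
    | zero =>
      intro hts _
      have ht0 : t = 0 := by omega
      subst ht0
      rw [Finset.filter_false_of_mem (by intro j _; omega), Finset.prod_empty, one_mul]
    | succ s ih =>
      intro hts hsD
      by_cases hts' : t = s + 1
      · subst hts'
        rw [Finset.filter_false_of_mem (by intro j _; omega), Finset.prod_empty, one_mul]
      · have hts2 : t ≤ s := by omega
        have hsD' : s < D := by omega
        rw [ih hts2 hsD']
        rw [tailstep V hne hrow s hsD F
          (fun g g' h => hF g g' (fun j hj => h j (le_trans hj hts2)))]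
        have hfil : Finset.univ.filter (fun j : Fin D => t < j.val ∧ j.val ≤ s + 1)
            = insert (⟨s + 1, hsD⟩ : Fin D)
                (Finset.univ.filter (fun j : Fin D => t < j.val ∧ j.val ≤ s)) := by
          ext j
          simp only [Finset.mem_filter, Finset.mem_insert, Finset.mem_univ, true_and,
            Fin.ext_iff]
          omega
        rw [hfil, Finset.prod_insert (by simp)]
        ring
  have h1 := main (D - 1) (by omega) (by omega)
  rw [h1]
  congr 1
  apply Finset.prod_congr _ (fun _ _ => rfl)
  ext j
  simp only [Finset.mem_filter, Finset.mem_univ, true_and]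
  have := j.isLt
  omega

lemma normsplit (t : ℕ) (ht1 : t + 1 < D) :
    (∏ j ∈ Finset.univ.filter (fun j : Fin D => t < j.val), (Fintype.card (β j) : ℝ))
      = (Fintype.card (β ⟨t + 1, ht1⟩) : ℝ) *
        ∏ j ∈ Finset.univ.filter (fun j : Fin D => t + 1 < j.val), (Fintype.card (β j) : ℝ) := by
  have hfil : Finset.univ.filter (fun j : Fin D => t < j.val)
      = insert (⟨t + 1, ht1⟩ : Fin D) (Finset.univ.filter (fun j : Fin D => t + 1 < j.val)) := by
    ext j
    simp only [Finset.mem_filter, Finset.mem_insert, Finset.mem_univ, true_and, Fin.ext_iff]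
    omega
  rw [hfil, Finset.prod_insert (by simp)]

lemma normne (hne : ∀ j, Nonempty (β j)) (t : ℕ) :
    (∏ j ∈ Finset.univ.filter (fun j : Fin D => t < j.val), (Fintype.card (β j) : ℝ)) ≠ 0 := by
  refine Finset.prod_ne_zero_iff.mpr fun j _ => ?_
  haveI := hne j
  exact_mod_cast Fintype.card_ne_zero

lemma base0 (hne : ∀ j, Nonempty (β j))
    (hrow : ∀ k (h : k + 1 < D) a, ∑ b, V k h a b = 1)
    (hD0 : 0 < D) (y : β ⟨0, hD0⟩) (c : ℝ) :
    ∑ g : ∀ j, β j, (if g ⟨0, hD0⟩ = y then c else 0) * cPref V (D - 1) g = c := by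
  set F : (∀ j, β j) → ℝ := fun g => if g ⟨0, hD0⟩ = y then c else 0 with hFdef
  have hFdep : ∀ g g', (∀ j : Fin D, j.val ≤ 0 → g j = g' j) → F g = F g' := by
    intro g g' h
    simp only [hFdef]
    rw [h ⟨0, hD0⟩ (le_refl 0)]
  have htail := tail V hne hrow 0 hD0 F hFdep
  have h0 : ∑ g : ∀ j, β j, F g * cPref V 0 g = ∑ g : ∀ j, β j, F g := by
    refine Finset.sum_congr rfl fun g _ => ?_
    unfold cPref
    rw [Finset.prod_range_zero, mul_one]
  have hcount : ∑ g : ∀ j, β j, F g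
      = (∏ j ∈ Finset.univ.filter (fun j : Fin D => (0:ℕ) < j.val),
          (Fintype.card (β j) : ℝ)) * c := by
    have e1 : ∑ g : ∀ j, β j, F g
        = (∑ g : ∀ j, β j, (if g ⟨0, hD0⟩ = y then (1:ℝ) else 0)) * c := by
      rw [Finset.sum_mul]
      refine Finset.sum_congr rfl fun g _ => ?_
      simp only [hFdef, ite_mul, one_mul, zero_mul]
    rw [e1, sum_countf hne ⟨0, hD0⟩ y]
    congr 2
    ext j
    simp only [Finset.mem_filter, Finset.mem_univ, true_and, ne_eq, Fin.ext_iff]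
    omega
  have := htail
  rw [h0, hcount] at this
  exact (mul_left_cancel₀ (normne hne 0) this.symm)

lemma key {α : Type} [Fintype α] (hne : ∀ j, Nonempty (β j))
    (hrow : ∀ k (h : k + 1 < D) a, ∑ b, V k h a b = 1)
    (hD0 : 0 < D)
    (μ0 : α → β ⟨0, hD0⟩ → ℝ) (t : ℕ) (ht1 : t + 1 < D)
    (S : α × (∀ j, β j) → Prop)
    (z : β ⟨t, Nat.lt_of_succ_lt ht1⟩) (b : β ⟨t + 1, ht1⟩)
    (h1 : ∀ ω', S ω' → ω'.2 ⟨t, Nat.lt_of_succ_lt ht1⟩ = z)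
    (h2 : ∀ x (g g' : ∀ j, β j), (∀ j : Fin D, j.val ≤ t → g j = g' j) →
      (S (x, g) ↔ S (x, g'))) :
    ∑ ω' : α × (∀ j, β j),
        (if S ω' ∧ ω'.2 ⟨t + 1, ht1⟩ = b
          then μ0 ω'.1 (ω'.2 ⟨0, hD0⟩) * cPref V (D - 1) ω'.2 else 0)
      = (∑ ω' : α × (∀ j, β j),
          if S ω' then μ0 ω'.1 (ω'.2 ⟨0, hD0⟩) * cPref V (D - 1) ω'.2 else 0)
          * V t ht1 z b := by
  rw [Fintype.sum_prod_type, Fintype.sum_prod_type, Finset.sum_mul]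
  refine Finset.sum_congr rfl fun x _ => ?_
  set F : (∀ j, β j) → ℝ := fun g => if S (x, g) then μ0 x (g ⟨0, hD0⟩) else 0 with hFdef
  set Fl : (∀ j, β j) → ℝ := fun g => if g ⟨t + 1, ht1⟩ = b then F g else 0 with hFldef
  have hFdep : ∀ g g', (∀ j : Fin D, j.val ≤ t → g j = g' j) → F g = F g' := by
    intro g g' h
    simp only [hFdef]
    by_cases hS : S (x, g)
    · rw [if_pos hS, if_pos ((h2 x g g' h).mp hS), h ⟨0, hD0⟩ (Nat.zero_le t)]
    · rw [if_neg hS, if_neg (fun hS' => hS ((h2 x g g' h).mpr hS'))]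
  have hFldep : ∀ g g', (∀ j : Fin D, j.val ≤ t + 1 → g j = g' j) → Fl g = Fl g' := by
    intro g g' h
    simp only [hFldef]
    rw [h ⟨t + 1, ht1⟩ (le_refl (t + 1)), hFdep g g' (fun j hj => h j (by omega))]
  have lhseq : (∑ g : ∀ j, β j,
        if S (x, g) ∧ g ⟨t + 1, ht1⟩ = b
          then μ0 x (g ⟨0, hD0⟩) * cPref V (D - 1) g else 0)
      = ∑ g : ∀ j, β j, Fl g * cPref V (D - 1) g := by
    refine Finset.sum_congr rfl fun g _ => ?_
    by_cases hgi : g ⟨t + 1, ht1⟩ = b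
    · by_cases hS : S (x, g)
      · simp [hFldef, hFdef, hgi, hS]
      · simp [hFldef, hFdef, hgi, hS]
    · simp [hFldef, hgi]
  have rhseq : (∑ g : ∀ j, β j,
        if S (x, g) then μ0 x (g ⟨0, hD0⟩) * cPref V (D - 1) g else 0)
      = ∑ g : ∀ j, β j, F g * cPref V (D - 1) g := by
    refine Finset.sum_congr rfl fun g _ => ?_
    by_cases hS : S (x, g)
    · simp [hFdef, hS]
    · simp [hFdef, hS]
  rw [lhseq, rhseq]
  have tail1 := tail V hne hrow (t + 1) ht1 Fl hFldep
  have tail0 := tail V hne hrow t (Nat.lt_of_succ_lt ht1) F hFdep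
  have subst1 : ∑ g : ∀ j, β j, Fl g * cPref V (t + 1) g
      = (∑ g : ∀ j, β j, Fl g * cPref V t g) * V t ht1 z b := by
    rw [Finset.sum_mul]
    refine Finset.sum_congr rfl fun g _ => ?_
    rw [cPref_succ, dif_pos ht1]
    by_cases hgi : g ⟨t + 1, ht1⟩ = b
    · by_cases hS : S (x, g)
      · have hz : g ⟨t, Nat.lt_of_succ_lt ht1⟩ = z := h1 (x, g) hS
        rw [hz, hgi]
        ring
      · simp [hFldef, hFdef, hS]
    · simp [hFldef, hgi]
  have drop1 : ∑ g : ∀ j, β j, F g * cPref V t g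
      = (Fintype.card (β ⟨t + 1, ht1⟩) : ℝ) * ∑ g : ∀ j, β j, Fl g * cPref V t g := by
    have hHupd : ∀ (g : ∀ j, β j) (y : β ⟨t + 1, ht1⟩),
        F (Function.update g ⟨t + 1, ht1⟩ y) * cPref V t (Function.update g ⟨t + 1, ht1⟩ y)
          = F g * cPref V t g := by
      intro g y
      have hco : ∀ j : Fin D, j.val ≤ t → Function.update g ⟨t + 1, ht1⟩ y j = g j := by
        intro j hj
        exact Function.update_of_ne (Fin.ne_of_val_ne (show j.val ≠ t + 1 by omega)) _ _
      rw [hFdep _ _ hco, cPref_congr V hco]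
    have hd := sum_drop ⟨t + 1, ht1⟩ (fun g => F g * cPref V t g) hHupd b
    rw [hd]
    congr 1
    refine Finset.sum_congr rfl fun g _ => ?_
    by_cases hgi : g ⟨t + 1, ht1⟩ = b
    · simp [hFldef, hgi]
    · simp [hFldef, hgi]
  have hcne : (Fintype.card (β ⟨t + 1, ht1⟩) : ℝ) ≠ 0 := by
    haveI := hne (⟨t + 1, ht1⟩ : Fin D)
    exact_mod_cast Fintype.card_ne_zero
  set card1 : ℝ := (Fintype.card (β ⟨t + 1, ht1⟩) : ℝ) with hcard1
  set P1 : ℝ := ∏ j ∈ Finset.univ.filter (fun j : Fin D => t + 1 < j.val),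
    (Fintype.card (β j) : ℝ) with hP1
  set P0 : ℝ := ∏ j ∈ Finset.univ.filter (fun j : Fin D => t < j.val),
    (Fintype.card (β j) : ℝ) with hP0
  have hP : P0 = card1 * P1 := normsplit t ht1
  have key0 : (card1 * P1) * (∑ g : ∀ j, β j, Fl g * cPref V (D - 1) g)
      = (card1 * P1) * ((∑ g : ∀ j, β j, F g * cPref V (D - 1) g) * V t ht1 z b) := by
    calc (card1 * P1) * (∑ g : ∀ j, β j, Fl g * cPref V (D - 1) g)
        = card1 * (P1 * ∑ g : ∀ j, β j, Fl g * cPref V (D - 1) g) := by ring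
      _ = card1 * (∑ g : ∀ j, β j, Fl g * cPref V (t + 1) g) := by rw [← tail1]
      _ = card1 * ((∑ g : ∀ j, β j, Fl g * cPref V t g) * V t ht1 z b) := by rw [subst1]
      _ = (card1 * ∑ g : ∀ j, β j, Fl g * cPref V t g) * V t ht1 z b := by ring
      _ = (∑ g : ∀ j, β j, F g * cPref V t g) * V t ht1 z b := by rw [← drop1]
      _ = (P0 * ∑ g : ∀ j, β j, F g * cPref V (D - 1) g) * V t ht1 z b := by rw [tail0]
      _ = (card1 * P1) * ((∑ g : ∀ j, β j, F g * cPref V (D - 1) g) * V t ht1 z b) := by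
          rw [hP]; ring
  exact mul_left_cancel₀ (mul_ne_zero hcne (normne hne (t + 1))) key0

end Aux

lemma prE_univ {Ω₁ α₁ : Type} [F : Fintype Ω₁] (p : Ω₁ → ℝ) (Xm : Ω₁ → α₁) (x : α₁) :
    prE F p Xm x = ∑ ω : Ω₁, (if Xm ω = x then p ω else 0) := rfl

lemma prE_nonneg {Ω₁ α₁ : Type} [F : Fintype Ω₁] (p : Ω₁ → ℝ) (hp : ∀ ω, 0 ≤ p ω)
    (Xm : Ω₁ → α₁) (x : α₁) : 0 ≤ prE F p Xm x := by
  rw [prE_univ]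
  refine Finset.sum_nonneg fun ω _ => ?_
  split_ifs
  · exact hp ω
  · exact le_refl 0

lemma prE_total {Ω₁ δ : Type} [F : Fintype Ω₁] [Fintype δ] (p : Ω₁ → ℝ) (f : Ω₁ → δ) :
    ∑ v : δ, prE F p f v = ∑ ω : Ω₁, p ω := by
  have : ∀ v, prE F p f v = ∑ ω : Ω₁, (if f ω = v then p ω else 0) := fun v => prE_univ p f v
  rw [Finset.sum_congr rfl fun v _ => this v, Finset.sum_comm]
  refine Finset.sum_congr rfl fun ω _ => ?_
  rw [Finset.sum_ite_eq Finset.univ (f ω) (fun _ => p ω), if_pos (Finset.mem_univ _)]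


lemma ite_iff_congr {P Q : Prop} {i1 : Decidable P} {i2 : Decidable Q} (h : P ↔ Q) (v : ℝ) :
    (@ite ℝ P i1 v 0) = (@ite ℝ Q i2 v 0) := by
  by_cases hP : P
  · rw [if_pos hP, if_pos (h.mp hP)]
  · rw [if_neg hP, if_neg (fun hq => hP (h.mpr hq))]

/-- Degradedness implies a Markov coupling (Appendix A): if every `Y_j` with `j > i` is a
stochastically degraded version of `Y_i` (there is a channel `W` with
`P_{X,Y_j}(x,z) = ∑_y P_{X,Y_i}(x,y) W(y,z)`), then there exist random variables
`X', Y'_1, …, Y'_D` with the same pairwise joint distributions `(X', Y'_ℓ) ~ (X, Y_ℓ)`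
forming the Markov chain `X' → Y'_1 → ⋯ → Y'_D`. -/
theorem stmt16 {Ω α : Type} [FΩ : Fintype Ω] [Fintype α]
    (D : ℕ) (hD : 1 ≤ D) (β : Fin D → Type) [∀ ℓ, Fintype (β ℓ)]
    (p : Ω → ℝ) (hp0 : ∀ ω, 0 ≤ p ω) (hp1 : ∑ ω : Ω, p ω = 1)
    (X : Ω → α) (Y : (ℓ : Fin D) → Ω → β ℓ)
    (hdeg : ∀ i j : Fin D, i < j →
      ∃ W : β i → β j → ℝ, (∀ a b, 0 ≤ W a b) ∧ (∀ a, ∑ b : β j, W a b = 1) ∧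
        ∀ (x : α) (z : β j),
          prE FΩ p (fun ω => (X ω, Y j ω)) (x, z)
            = ∑ y : β i, prE FΩ p (fun ω => (X ω, Y i ω)) (x, y) * W y z) :
    ∃ (Ω' : Type) (F' : Fintype Ω') (p' : Ω' → ℝ) (X' : Ω' → α)
      (Y' : (ℓ : Fin D) → Ω' → β ℓ),
      (∀ ω', 0 ≤ p' ω') ∧ (F'.elems.sum p' = 1) ∧
      (∀ (ℓ : Fin D) (x : α) (y : β ℓ),
        prE F' p' (fun ω' => (X' ω', Y' ℓ ω')) (x, y)
          = prE FΩ p (fun ω => (X ω, Y ℓ ω)) (x, y)) ∧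
      (∀ ℓ : Fin D, 1 ≤ ℓ.val →
        mutInfoE F' p'
          (fun ω' => (X' ω', fun j : {j : Fin D // j.val + 1 < ℓ.val} => Y' j.val ω'))
          (Y' ℓ)
          (Y' ⟨ℓ.val - 1, Nat.lt_of_le_of_lt (Nat.sub_le _ _) ℓ.isLt⟩) = 0) := by
    classical
  have hD0 : 0 < D := hD
  haveI hΩne : Nonempty Ω := by
    by_contra h
    rw [not_nonempty_iff] at h
    rw [Finset.univ_eq_empty, Finset.sum_empty] at hp1
    exact absurd hp1 (by norm_num)
  have hne : ∀ j : Fin D, Nonempty (β j) := fun j => ⟨Y j (Classical.arbitrary Ω)⟩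
  have hdeg' : ∀ (k : ℕ) (h : k + 1 < D),
      ∃ W : β ⟨k, Nat.lt_of_succ_lt h⟩ → β ⟨k + 1, h⟩ → ℝ,
        (∀ a b, 0 ≤ W a b) ∧ (∀ a, ∑ b, W a b = 1) ∧
        ∀ (x : α) (z : β ⟨k + 1, h⟩),
          prE FΩ p (fun ω => (X ω, Y ⟨k + 1, h⟩ ω)) (x, z)
            = ∑ y, prE FΩ p (fun ω => (X ω, Y ⟨k, Nat.lt_of_succ_lt h⟩ ω)) (x, y) * W y z :=
    fun k h => hdeg ⟨k, Nat.lt_of_succ_lt h⟩ ⟨k + 1, h⟩ (Fin.mk_lt_mk.mpr (Nat.lt_succ_self k))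
  set V : (k : ℕ) → (h : k + 1 < D) → β ⟨k, Nat.lt_of_succ_lt h⟩ → β ⟨k + 1, h⟩ → ℝ :=
    fun k h => Classical.choose (hdeg' k h) with hVdef
  have hV0 : ∀ k (h : k + 1 < D) a b, 0 ≤ V k h a b :=
    fun k h => (Classical.choose_spec (hdeg' k h)).1
  have hrow : ∀ k (h : k + 1 < D) a, ∑ b, V k h a b = 1 :=
    fun k h => (Classical.choose_spec (hdeg' k h)).2.1
  have hVdeg : ∀ k (h : k + 1 < D) (x : α) (z : β ⟨k + 1, h⟩),
      prE FΩ p (fun ω => (X ω, Y ⟨k + 1, h⟩ ω)) (x, z)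
        = ∑ y, prE FΩ p (fun ω => (X ω, Y ⟨k, Nat.lt_of_succ_lt h⟩ ω)) (x, y) * V k h y z :=
    fun k h => (Classical.choose_spec (hdeg' k h)).2.2
  set μ0 : α → β ⟨0, hD0⟩ → ℝ :=
    fun x y => prE FΩ p (fun ω => (X ω, Y ⟨0, hD0⟩ ω)) (x, y) with hμ0def
  set p' : α × (∀ j : Fin D, β j) → ℝ :=
    fun ω' => μ0 ω'.1 (ω'.2 ⟨0, hD0⟩) * cPref V (D - 1) ω'.2 with hp'def
  -- the pairwise marginal identity
  have hmarg : ∀ (n : ℕ) (hn : n < D) (x : α) (y : β ⟨n, hn⟩),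
      (∑ ω' : α × (∀ j : Fin D, β j),
          if ω'.1 = x ∧ ω'.2 ⟨n, hn⟩ = y then p' ω' else 0)
        = prE FΩ p (fun ω => (X ω, Y ⟨n, hn⟩ ω)) (x, y) := by
    intro n
    induction n with
    | zero =>
      intro hn x y
      rw [Fintype.sum_prod_type]
      have inner : ∀ a : α,
          (∑ g : ∀ j, β j, if (a, g).1 = x ∧ (a, g).2 ⟨0, hn⟩ = y then p' (a, g) else 0)
            = if a = x then prE FΩ p (fun ω => (X ω, Y ⟨0, hn⟩ ω)) (x, y) else 0 := by
        intro a
        by_cases hax : a = x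
        · subst hax
          rw [if_pos rfl]
          have e : ∀ g : ∀ j, β j,
              (if (a, g).1 = a ∧ (a, g).2 ⟨0, hn⟩ = y then p' (a, g) else 0)
                = (if g ⟨0, hn⟩ = y
                    then prE FΩ p (fun ω => (X ω, Y ⟨0, hn⟩ ω)) (a, y) else 0)
                      * cPref V (D - 1) g := by
            intro g
            by_cases hgy : g ⟨0, hn⟩ = y
            · rw [if_pos ⟨rfl, hgy⟩, if_pos hgy, hp'def]
              show μ0 a (g ⟨0, hD0⟩) * cPref V (D - 1) g = _
              rw [hμ0def]
              show prE FΩ p (fun ω => (X ω, Y ⟨0, hD0⟩ ω)) (a, g ⟨0, hD0⟩) * _ = _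
              have : g ⟨0, hD0⟩ = y := hgy
              rw [this]
            · rw [if_neg (fun hc => hgy hc.2), if_neg hgy, zero_mul]
          rw [Finset.sum_congr rfl fun g _ => e g]
          exact base0 V hne hrow hn y _
        · rw [if_neg hax]
          exact Finset.sum_eq_zero fun g _ => if_neg (fun hc => hax hc.1)
      rw [Finset.sum_congr rfl fun a _ => inner a,
        Finset.sum_ite_eq' Finset.univ x
          (fun _ => prE FΩ p (fun ω => (X ω, Y ⟨0, hn⟩ ω)) (x, y)),
        if_pos (Finset.mem_univ _)]
    | succ n ih =>
      intro hn1 x z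
      have hn : n < D := Nat.lt_of_succ_lt hn1
      have part : (∑ ω' : α × (∀ j : Fin D, β j),
            if ω'.1 = x ∧ ω'.2 ⟨n + 1, hn1⟩ = z then p' ω' else 0)
          = ∑ y : β ⟨n, hn⟩, ∑ ω' : α × (∀ j : Fin D, β j),
              if (ω'.1 = x ∧ ω'.2 ⟨n, hn⟩ = y) ∧ ω'.2 ⟨n + 1, hn1⟩ = z
                then p' ω' else 0 := by
        rw [Finset.sum_comm]
        refine Finset.sum_congr rfl fun ω' _ => ?_
        by_cases hc : ω'.1 = x ∧ ω'.2 ⟨n + 1, hn1⟩ = z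
        · rw [if_pos hc]
          have e : ∀ y : β ⟨n, hn⟩,
              (if (ω'.1 = x ∧ ω'.2 ⟨n, hn⟩ = y) ∧ ω'.2 ⟨n + 1, hn1⟩ = z
                then p' ω' else 0)
              = if ω'.2 ⟨n, hn⟩ = y then p' ω' else 0 := by
            intro y
            by_cases hy : ω'.2 ⟨n, hn⟩ = y
            · rw [if_pos ⟨⟨hc.1, hy⟩, hc.2⟩, if_pos hy]
            · rw [if_neg (fun hcc => hy hcc.1.2), if_neg hy]
          rw [Finset.sum_congr rfl fun y _ => e y,
            Finset.sum_ite_eq Finset.univ (ω'.2 ⟨n, hn⟩) (fun _ => p' ω'),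
            if_pos (Finset.mem_univ _)]
        · rw [if_neg hc]
          exact (Finset.sum_eq_zero fun y _ => if_neg (fun hcc => hc ⟨hcc.1.1, hcc.2⟩)).symm
      rw [part]
      have keyapp : ∀ y : β ⟨n, hn⟩,
          (∑ ω' : α × (∀ j : Fin D, β j),
              if (ω'.1 = x ∧ ω'.2 ⟨n, hn⟩ = y) ∧ ω'.2 ⟨n + 1, hn1⟩ = z
                then p' ω' else 0)
            = (∑ ω' : α × (∀ j : Fin D, β j),
                if ω'.1 = x ∧ ω'.2 ⟨n, hn⟩ = y then p' ω' else 0) * V n hn1 y z := by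
        intro y
        have hk := key V hne hrow hD0 μ0 n hn1
          (fun ω' => ω'.1 = x ∧ ω'.2 ⟨n, Nat.lt_of_succ_lt hn1⟩ = y) y z
          (fun ω' hS => hS.2)
          (fun a g g' h => by
            have e := h ⟨n, Nat.lt_of_succ_lt hn1⟩ (le_refl n)
            constructor
            · rintro ⟨h1', h2'⟩
              refine ⟨h1', ?_⟩
              show g' ⟨n, Nat.lt_of_succ_lt hn1⟩ = y
              rw [← e]
              exact h2'
            · rintro ⟨h1', h2'⟩
              refine ⟨h1', ?_⟩
              show g ⟨n, Nat.lt_of_succ_lt hn1⟩ = y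
              rw [e]
              exact h2')
        exact hk
      rw [Finset.sum_congr rfl fun y _ => keyapp y,
        Finset.sum_congr rfl fun y _ => by rw [ih hn x y]]
      exact (hVdeg n hn1 x z).symm
  refine ⟨α × (∀ j : Fin D, β j), inferInstance, p', Prod.fst, fun ℓ ω' => ω'.2 ℓ,
    ?_, ?_, ?_, ?_⟩
  · intro ω'
    exact mul_nonneg (prE_nonneg p hp0 _ _) (cPref_nonneg V hV0 _ _)
  · show (∑ ω' : α × (∀ j : Fin D, β j), p' ω') = 1
    have h1 : ∑ v : α × β ⟨0, hD0⟩,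
        prE inferInstance p' (fun ω' => (ω'.1, ω'.2 ⟨0, hD0⟩)) v
          = ∑ ω' : α × (∀ j : Fin D, β j), p' ω' := prE_total p' _
    have h2 : ∀ v : α × β ⟨0, hD0⟩,
        prE inferInstance p' (fun ω' => (ω'.1, ω'.2 ⟨0, hD0⟩)) v
          = prE FΩ p (fun ω => (X ω, Y ⟨0, hD0⟩ ω)) v := by
      rintro ⟨x, y⟩
      rw [prE_univ]
      refine Eq.trans ?_ (hmarg 0 hD0 x y)
      refine Finset.sum_congr rfl fun ω' _ => ?_
      simp only [Prod.mk.injEq]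
    rw [← h1, Finset.sum_congr rfl fun v _ => h2 v, prE_total p (fun ω => (X ω, Y ⟨0, hD0⟩ ω))]
    exact hp1
  · intro ℓ x y
    rw [prE_univ]
    refine Eq.trans (Finset.sum_congr rfl fun ω' _ => ?_) (hmarg ℓ.val ℓ.isLt x y)
    simp only [Prod.mk.injEq]
  · intro ℓ
    revert ℓ
    rintro ⟨lv, hl⟩ hℓ
    obtain ⟨n, rfl⟩ : ∃ n, lv = n + 1 := ⟨lv - 1, by simp at hℓ; omega⟩
    show mutInfoE inferInstance p'
      (fun ω' => (ω'.1, fun j : {j : Fin D // j.val + 1 < n + 1} => ω'.2 j.val))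
      (fun ω' => ω'.2 ⟨n + 1, hl⟩)
      (fun ω' => ω'.2 ⟨n, Nat.lt_of_succ_lt hl⟩) = 0
    have fact1 : ∀ (a : α × ((j : {j : Fin D // j.val + 1 < n + 1}) → β j.val))
        (zv : β ⟨n, Nat.lt_of_succ_lt hl⟩) (b : β ⟨n + 1, hl⟩),
        prE inferInstance p'
          (fun ω' => ((ω'.1, fun j : {j : Fin D // j.val + 1 < n + 1} => ω'.2 j.val),
            (ω'.2 ⟨n + 1, hl⟩, ω'.2 ⟨n, Nat.lt_of_succ_lt hl⟩))) (a, (b, zv))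
        = prE inferInstance p'
            (fun ω' => ((ω'.1, fun j : {j : Fin D // j.val + 1 < n + 1} => ω'.2 j.val),
              ω'.2 ⟨n, Nat.lt_of_succ_lt hl⟩)) (a, zv) * V n hl zv b := by
      intro a zv b
      rw [prE_univ, prE_univ]
      have hk := key V hne hrow hD0 μ0 n hl
        (fun ω' => (ω'.1 = a.1 ∧
            (fun j : {j : Fin D // j.val + 1 < n + 1} => ω'.2 j.val) = a.2)
          ∧ ω'.2 ⟨n, Nat.lt_of_succ_lt hl⟩ = zv) zv b
        (fun ω' hS => hS.2)
        (fun x g g' h => by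
          have e1 : (fun j : {j : Fin D // j.val + 1 < n + 1} => g j.val)
              = (fun j : {j : Fin D // j.val + 1 < n + 1} => g' j.val) :=
            funext fun j => h j.val (by have := j.prop; omega)
          have e2 := h ⟨n, Nat.lt_of_succ_lt hl⟩ (le_refl n)
          constructor
          · rintro ⟨⟨c1, c2⟩, c3⟩
            refine ⟨⟨c1, ?_⟩, ?_⟩
            · show (fun j : {j : Fin D // j.val + 1 < n + 1} => g' j.val) = a.2
              rw [← e1]; exact c2
            · show g' ⟨n, Nat.lt_of_succ_lt hl⟩ = zv
              rw [← e2]; exact c3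
          · rintro ⟨⟨c1, c2⟩, c3⟩
            refine ⟨⟨c1, ?_⟩, ?_⟩
            · show (fun j : {j : Fin D // j.val + 1 < n + 1} => g j.val) = a.2
              rw [e1]; exact c2
            · show g ⟨n, Nat.lt_of_succ_lt hl⟩ = zv
              rw [e2]; exact c3)
      refine Eq.trans (Finset.sum_congr rfl fun ω' _ => ?_) (hk.trans ?_)
      · refine ite_iff_congr ?_ _
        simp only [Prod.mk.injEq, Prod.ext_iff]
        tauto
      · congr 1
        refine Finset.sum_congr rfl fun ω' _ => ?_
        refine ite_iff_congr ?_ _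
        simp only [Prod.mk.injEq, Prod.ext_iff]
    have fact2 : ∀ (zv : β ⟨n, Nat.lt_of_succ_lt hl⟩) (b : β ⟨n + 1, hl⟩),
        prE inferInstance p'
          (fun ω' => (ω'.2 ⟨n + 1, hl⟩, ω'.2 ⟨n, Nat.lt_of_succ_lt hl⟩)) (b, zv)
        = prE inferInstance p'
            (fun ω' => ω'.2 ⟨n, Nat.lt_of_succ_lt hl⟩) zv * V n hl zv b := by
      intro zv b
      rw [prE_univ, prE_univ]
      have hk := key V hne hrow hD0 μ0 n hl
        (fun ω' : α × (∀ j : Fin D, β j) => ω'.2 ⟨n, Nat.lt_of_succ_lt hl⟩ = zv) zv b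
        (fun ω' hS => hS)
        (fun x g g' h => by
          have e2 := h ⟨n, Nat.lt_of_succ_lt hl⟩ (le_refl n)
          constructor
          · intro c3
            show g' ⟨n, Nat.lt_of_succ_lt hl⟩ = zv
            rw [← e2]; exact c3
          · intro c3
            show g ⟨n, Nat.lt_of_succ_lt hl⟩ = zv
            rw [e2]; exact c3)
      refine Eq.trans (Finset.sum_congr rfl fun ω' _ => ?_) (hk.trans ?_)
      · refine ite_iff_congr ?_ _
        simp only [Prod.mk.injEq]
        tauto
      · congr 1
    rw [mutInfoE, sub_eq_zero]
    rw [condEntE, condEntE, neg_inj]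
    refine Finset.sum_congr rfl fun a _ => ?_
    rw [Fintype.sum_prod_type, Finset.sum_comm]
    refine Finset.sum_congr rfl fun zv _ => ?_
    have e : ∀ b : β ⟨n + 1, hl⟩,
        prE inferInstance p'
          (fun ω' => ((ω'.1, fun j : {j : Fin D // j.val + 1 < n + 1} => ω'.2 j.val),
            (ω'.2 ⟨n + 1, hl⟩, ω'.2 ⟨n, Nat.lt_of_succ_lt hl⟩))) (a, (b, zv))
        * Real.log (prE inferInstance p'
            (fun ω' => ((ω'.1, fun j : {j : Fin D // j.val + 1 < n + 1} => ω'.2 j.val),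
              (ω'.2 ⟨n + 1, hl⟩, ω'.2 ⟨n, Nat.lt_of_succ_lt hl⟩))) (a, (b, zv))
          / prE inferInstance p'
              (fun ω' => (ω'.2 ⟨n + 1, hl⟩, ω'.2 ⟨n, Nat.lt_of_succ_lt hl⟩)) (b, zv))
        = (prE inferInstance p'
            (fun ω' => ((ω'.1, fun j : {j : Fin D // j.val + 1 < n + 1} => ω'.2 j.val),
              ω'.2 ⟨n, Nat.lt_of_succ_lt hl⟩)) (a, zv)
          * Real.log (prE inferInstance p'
              (fun ω' => ((ω'.1, fun j : {j : Fin D // j.val + 1 < n + 1} => ω'.2 j.val),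
                ω'.2 ⟨n, Nat.lt_of_succ_lt hl⟩)) (a, zv)
            / prE inferInstance p'
                (fun ω' => ω'.2 ⟨n, Nat.lt_of_succ_lt hl⟩) zv)) * V n hl zv b := by
      intro b
      rw [fact1 a zv b, fact2 zv b]
      by_cases hVb : V n hl zv b = 0
      · rw [hVb]; ring
      · rw [mul_div_mul_right _ _ hVb]; ring
    rw [Finset.sum_congr rfl fun b _ => e b, ← Finset.mul_sum, hrow n hl zv, mul_one]
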